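/- Suppose a² < 4q. Then for every positive integer X, M(X)/q^{X/2} = 2·√((q + 1 - a)/(4q - a²))·cos(ω + X·θ), where θ = arccos(a/(2√q)) ∈ [0, π] and ω = arctan((a - 2)/√(4q - a²)) ∈ (-π/2, π/2); equivalently, M(X)/q^{X/2} = cos(X·θ) - ((a - 2)/√(4q - a²))·sin(X·θ). -/

import Mathlib

open Real Filter

/-- The coefficient sequence `c_N` with `c_0 = 1`, `c_1 = a - q - 1`,
`c_2 = a*c_1 - q*c_0 + q`, and `c_N = a*c_{N-1} - q*c_{N-2}` for `N ≥ 3`;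
these are the Taylor coefficients at `u = 0` of `(1-u)(1-qu)/(1-au+qu²)`,
the reciprocal of the zeta function of an elliptic curve over `F_q` with
Frobenius trace `a`. -/
def mertC (q a : ℤ) : ℕ → ℤ
  | 0 => 1
  | 1 => a - q - 1
  | 2 => a * (a - q - 1) - q * 1 + q
  | (N + 3) => a * mertC q a (N + 2) - q * mertC q a (N + 1)

/-- `M(X) = ∑_{N=0}^{X-1} c_N`, the Mertens summatory function of the
Möbius function of an elliptic curve over `F_q` with Frobenius trace `a`. -/
def mertM (q a : ℤ) (X : ℕ) : ℤ := ∑ N ∈ Finset.range X, mertC q a N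

lemma mertM_succ (q a : ℤ) (n : ℕ) : mertM q a (n + 1) = mertM q a n + mertC q a n :=
  Finset.sum_range_succ _ _

lemma mertM_rec (q a : ℤ) (X : ℕ) :
    mertM q a (X + 3) = a * mertM q a (X + 2) - q * mertM q a (X + 1) := by
  induction X with
  | zero =>
    simp [mertM, Finset.sum_range_succ, mertC]
    ring
  | succ Y ih =>
    have h4 := mertM_succ q a (Y + 3)
    have h3 := mertM_succ q a (Y + 2)
    have h2 := mertM_succ q a (Y + 1)
    have hc : mertC q a (Y + 3) = a * mertC q a (Y + 2) - q * mertC q a (Y + 1) := rfl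
    show mertM q a (Y + 4) = a * mertM q a (Y + 3) - q * mertM q a (Y + 2)
    calc mertM q a (Y + 4) = mertM q a (Y + 3) + mertC q a (Y + 3) := h4
      _ = (a * mertM q a (Y + 2) - q * mertM q a (Y + 1)) +
            (a * mertC q a (Y + 2) - q * mertC q a (Y + 1)) := by rw [ih, hc]
      _ = a * (mertM q a (Y + 2) + mertC q a (Y + 2)) -
            q * (mertM q a (Y + 1) + mertC q a (Y + 1)) := by ring
      _ = a * mertM q a (Y + 3) - q * mertM q a (Y + 2) := by rw [← h3, ← h2]

lemma mert_key (q a : ℤ) (hq : 2 ≤ q) (ha : a ^ 2 < 4 * q) (X : ℕ) (hX : 1 ≤ X) :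
    (mertM q a X : ℝ) = (q : ℝ) ^ ((X : ℝ) / 2) *
      (Real.cos ((X : ℝ) * Real.arccos ((a : ℝ) / (2 * Real.sqrt (q : ℝ)))) -
        ((a : ℝ) - 2) / Real.sqrt (4 * (q : ℝ) - (a : ℝ) ^ 2) *
          Real.sin ((X : ℝ) * Real.arccos ((a : ℝ) / (2 * Real.sqrt (q : ℝ))))) := by
  set S := Real.sqrt (4 * (q : ℝ) - (a : ℝ) ^ 2) with hSdef
  set θ := Real.arccos ((a : ℝ) / (2 * Real.sqrt (q : ℝ))) with hθ
  set κ := ((a : ℝ) - 2) / S with hκ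
  have hqpos : (0 : ℝ) < (q : ℝ) := by exact_mod_cast lt_of_lt_of_le (by norm_num) hq
  set r := Real.sqrt (q : ℝ) with hrdef
  have hr : 0 < r := Real.sqrt_pos.mpr hqpos
  have hr0 : r ≠ 0 := ne_of_gt hr
  have hr2 : r ^ 2 = (q : ℝ) := Real.sq_sqrt hqpos.le
  have hD : (0 : ℝ) < 4 * (q : ℝ) - (a : ℝ) ^ 2 := by
    have : ((a : ℝ)) ^ 2 < 4 * (q : ℝ) := by exact_mod_cast ha
    linarith
  have hS : 0 < S := Real.sqrt_pos.mpr hD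
  have hS0 : S ≠ 0 := ne_of_gt hS
  have hS2 : S ^ 2 = 4 * (q : ℝ) - (a : ℝ) ^ 2 := Real.sq_sqrt hD.le
  have hsq : ((a : ℝ) / (2 * r)) ^ 2 ≤ 1 := by
    rw [div_pow, div_le_one (by positivity)]
    nlinarith
  have habs : |(a : ℝ) / (2 * r)| ≤ 1 := (sq_le_one_iff_abs_le_one _).mp hsq
  have hcos : Real.cos θ = (a : ℝ) / (2 * r) :=
    Real.cos_arccos (neg_le_of_abs_le habs) (le_of_abs_le habs)
  have hsin : Real.sin θ = S / (2 * r) := by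
    rw [hθ, Real.sin_arccos]
    rw [show 1 - ((a : ℝ) / (2 * r)) ^ 2 = (S / (2 * r)) ^ 2 by
      rw [div_pow, div_pow, hS2]
      field_simp
      nlinarith]
    exact Real.sqrt_sq (by positivity)
  have hca : 2 * r * Real.cos θ = (a : ℝ) := by rw [hcos]; field_simp
  have har : (a : ℝ) * r = 2 * (q : ℝ) * Real.cos θ := by
    rw [← hca, ← hr2]; ring
  -- the one-step recurrence for the closed form
  have step : ∀ t : ℝ,
      (q : ℝ) ^ ((t + 3) / 2) * (Real.cos ((t + 3) * θ) - κ * Real.sin ((t + 3) * θ)) =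
        (a : ℝ) * ((q : ℝ) ^ ((t + 2) / 2) *
            (Real.cos ((t + 2) * θ) - κ * Real.sin ((t + 2) * θ))) -
          (q : ℝ) * ((q : ℝ) ^ ((t + 1) / 2) *
            (Real.cos ((t + 1) * θ) - κ * Real.sin ((t + 1) * θ))) := by
    intro t
    have e3 : (t + 3) * θ = ((t + 2) * θ) + θ := by ring
    have e1 : (t + 1) * θ = ((t + 2) * θ) - θ := by ring
    have p3 : (q : ℝ) ^ ((t + 3) / 2) = (q : ℝ) ^ ((t + 1) / 2) * (q : ℝ) := by
      rw [show (t + 3) / 2 = (t + 1) / 2 + 1 by ring, Real.rpow_add hqpos, Real.rpow_one]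
    have p2 : (q : ℝ) ^ ((t + 2) / 2) = (q : ℝ) ^ ((t + 1) / 2) * r := by
      rw [show (t + 2) / 2 = (t + 1) / 2 + 1 / 2 by ring, Real.rpow_add hqpos, hrdef,
        Real.sqrt_eq_rpow]
    rw [e3, e1, Real.cos_add, Real.sin_add, Real.cos_sub, Real.sin_sub, p3, p2]
    linear_combination (-( (q : ℝ) ^ ((t + 1) / 2) *
      (Real.cos ((t + 2) * θ) - κ * Real.sin ((t + 2) * θ)))) * har
  have main : ∀ Y : ℕ,
      ((mertM q a (Y + 1) : ℝ) = (q : ℝ) ^ (((Y : ℝ) + 1) / 2) *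
        (Real.cos (((Y : ℝ) + 1) * θ) - κ * Real.sin (((Y : ℝ) + 1) * θ))) ∧
      ((mertM q a (Y + 2) : ℝ) = (q : ℝ) ^ (((Y : ℝ) + 2) / 2) *
        (Real.cos (((Y : ℝ) + 2) * θ) - κ * Real.sin (((Y : ℝ) + 2) * θ))) := by
    intro Y
    induction Y with
    | zero =>
      constructor
      · have hM1 : mertM q a 1 = 1 := by simp [mertM, mertC]
        rw [hM1]
        push_cast
        norm_num
        rw [← Real.sqrt_eq_rpow, ← hrdef, hcos, hsin, hκ]
        field_simp
        ring
      · have hM2 : mertM q a 2 = a - q := by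
          simp [mertM, Finset.sum_range_succ, mertC]
        rw [hM2]
        push_cast
        norm_num
        rw [show ((2 : ℝ)) * θ = 2 * θ by ring, Real.cos_two_mul, Real.sin_two_mul,
          hcos, hsin, hκ]
        field_simp
        linear_combination (2 * (a : ℝ)) * hr2
    | succ Z ih =>
      constructor
      · push_cast
        convert ih.2 using 3 <;> push_cast <;> ring
      · push_cast
        have hrec : (mertM q a (Z + 3) : ℝ) =
            (a : ℝ) * (mertM q a (Z + 2) : ℝ) - (q : ℝ) * (mertM q a (Z + 1) : ℝ) := by
          exact_mod_cast mertM_rec q a Z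
        show (mertM q a (Z + 3) : ℝ) = _
        rw [hrec, ih.1, ih.2]
        rw [show ((Z : ℝ) + 1 + 2) = (Z : ℝ) + 3 by ring]
        exact (step (Z : ℝ)).symm
  obtain ⟨Y, rfl⟩ : ∃ Y, X = Y + 1 := ⟨X - 1, by omega⟩
  have := (main Y).1
  push_cast at this ⊢
  convert this using 3 <;> ring

theorem mertens_formula_simple_zeroes (q a : ℤ) (hq : 2 ≤ q) (ha : a ^ 2 < 4 * q) :
    ∀ X : ℕ, 1 ≤ X →
      (mertM q a X : ℝ) / (q : ℝ) ^ ((X : ℝ) / 2) =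
        2 * Real.sqrt (((q : ℝ) + 1 - (a : ℝ)) / (4 * (q : ℝ) - (a : ℝ) ^ 2)) *
          Real.cos (Real.arctan (((a : ℝ) - 2) / Real.sqrt (4 * (q : ℝ) - (a : ℝ) ^ 2)) +
            (X : ℝ) * Real.arccos ((a : ℝ) / (2 * Real.sqrt (q : ℝ)))) ∧
      (mertM q a X : ℝ) / (q : ℝ) ^ ((X : ℝ) / 2) =
        Real.cos ((X : ℝ) * Real.arccos ((a : ℝ) / (2 * Real.sqrt (q : ℝ)))) -
          ((a : ℝ) - 2) / Real.sqrt (4 * (q : ℝ) - (a : ℝ) ^ 2) *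
            Real.sin ((X : ℝ) * Real.arccos ((a : ℝ) / (2 * Real.sqrt (q : ℝ)))) := by
  intro X hX
  have hqpos : (0 : ℝ) < (q : ℝ) := by exact_mod_cast lt_of_lt_of_le (by norm_num) hq
  have hD : (0 : ℝ) < 4 * (q : ℝ) - (a : ℝ) ^ 2 := by
    have : ((a : ℝ)) ^ 2 < 4 * (q : ℝ) := by exact_mod_cast ha
    linarith
  have hpow : (q : ℝ) ^ ((X : ℝ) / 2) ≠ 0 := (Real.rpow_pos_of_pos hqpos _).ne'
  have h2 : (mertM q a X : ℝ) / (q : ℝ) ^ ((X : ℝ) / 2) =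
      Real.cos ((X : ℝ) * Real.arccos ((a : ℝ) / (2 * Real.sqrt (q : ℝ)))) -
        ((a : ℝ) - 2) / Real.sqrt (4 * (q : ℝ) - (a : ℝ) ^ 2) *
          Real.sin ((X : ℝ) * Real.arccos ((a : ℝ) / (2 * Real.sqrt (q : ℝ)))) := by
    rw [mert_key q a hq ha X hX]
    field_simp
  refine ⟨?_, h2⟩
  rw [h2]
  set t := (X : ℝ) * Real.arccos ((a : ℝ) / (2 * Real.sqrt (q : ℝ))) with ht
  set κ := ((a : ℝ) - 2) / Real.sqrt (4 * (q : ℝ) - (a : ℝ) ^ 2) with hκ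
  set w := Real.sqrt (((q : ℝ) + 1 - (a : ℝ)) / (4 * (q : ℝ) - (a : ℝ) ^ 2)) with hw
  have hq1a : (0 : ℝ) < (q : ℝ) + 1 - (a : ℝ) := by nlinarith [sq_nonneg ((a : ℝ) - 2), hD]
  have hwpos : 0 < w := Real.sqrt_pos.mpr (by positivity)
  have hκ2 : κ ^ 2 = ((a : ℝ) - 2) ^ 2 / (4 * (q : ℝ) - (a : ℝ) ^ 2) := by
    rw [hκ, div_pow, Real.sq_sqrt hD.le]
  have h1k : 1 + κ ^ 2 = 4 * (((q : ℝ) + 1 - (a : ℝ)) / (4 * (q : ℝ) - (a : ℝ) ^ 2)) := by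
    rw [hκ2]
    field_simp
    ring
  have hs4 : Real.sqrt (1 + κ ^ 2) = 2 * w := by
    rw [h1k, Real.sqrt_mul (by norm_num : (0 : ℝ) ≤ 4),
      show Real.sqrt 4 = 2 by
        rw [show (4 : ℝ) = 2 ^ 2 by norm_num, Real.sqrt_sq (by norm_num : (0:ℝ) ≤ 2)]]
  rw [Real.cos_add, Real.cos_arctan, Real.sin_arctan, hs4]
  field_simp
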